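/- Let (B_1,B_2,a,b) be a handsaw quiver datum satisfying the moment map equation μ = 0. Then (B_1,B_2,a,b) is stable if and only if the linear map α_i|_z is surjective for every 1 ≤ i ≤ n−1 and every z ∈ ℂ. -/

import Mathlib

noncomputable section

open LinearMap Module

/-- The chain `B_{1,i-1} ∘ ⋯ ∘ B_{1,j} ∘ a_j : W_j → V_i` (zero/junk when out of range). -/
def AtoV {V W : ℕ → Type*}
    [∀ i, AddCommGroup (V i)] [∀ i, Module ℂ (V i)]
    [∀ i, AddCommGroup (W i)] [∀ i, Module ℂ (W i)]
    (B1 : ∀ i, V i →ₗ[ℂ] V (i + 1)) (a : ∀ i, W i →ₗ[ℂ] V i) :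
    (i j : ℕ) → (W j →ₗ[ℂ] V i)
  | 0, _ => 0
  | i + 1, j =>
    if h : j = i + 1 then cast (by rw [h]) (a j)
    else (B1 i) ∘ₗ (AtoV B1 a i j)

/-- The map `α_i|_z : W_1 ⊕ ⋯ ⊕ W_i ⊕ V_i → V_i`, whose restriction to `W_j` (`j ≤ i`) is
`B_{1,i-1} ∘ ⋯ ∘ B_{1,j} ∘ a_j` and whose restriction to `V_i` is `z·id − B_{2,i}`. -/
def alphaMap {V W : ℕ → Type*}
    [∀ i, AddCommGroup (V i)] [∀ i, Module ℂ (V i)]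
    [∀ i, AddCommGroup (W i)] [∀ i, Module ℂ (W i)]
    (B1 : ∀ i, V i →ₗ[ℂ] V (i + 1)) (B2 : ∀ i, V i →ₗ[ℂ] V i)
    (a : ∀ i, W i →ₗ[ℂ] V i) (i : ℕ) (z : ℂ) :
    ((∀ j : Fin i, W (j.val + 1)) × V i) →ₗ[ℂ] V i :=
  LinearMap.coprod
    (∑ j : Fin i, (AtoV B1 a i (j.val + 1)) ∘ₗ (LinearMap.proj j))
    (z • LinearMap.id - B2 i)

/-- The map `β_i : W_1 ⊕ ⋯ ⊕ W_i ⊕ V_i → W_1 ⊕ ⋯ ⊕ W_{i+1} ⊕ V_{i+1}`, the identity on each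
`W_j` (`j ≤ i`) and `(b_i, B_{1,i})` on `V_i`. -/
def betaMap {V W : ℕ → Type*}
    [∀ i, AddCommGroup (V i)] [∀ i, Module ℂ (V i)]
    [∀ i, AddCommGroup (W i)] [∀ i, Module ℂ (W i)]
    (B1 : ∀ i, V i →ₗ[ℂ] V (i + 1)) (b : ∀ i, V i →ₗ[ℂ] W (i + 1)) (i : ℕ) :
    ((∀ j : Fin i, W (j.val + 1)) × V i) →ₗ[ℂ]
      ((∀ j : Fin (i + 1), W (j.val + 1)) × V (i + 1)) :=
  LinearMap.prod
    (LinearMap.pi fun j' : Fin (i + 1) =>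
      if h : j'.val < i then
        (LinearMap.proj (⟨j'.val, h⟩ : Fin i)) ∘ₗ (LinearMap.fst ℂ _ _)
      else
        cast (by
          have hj : j'.val = i := le_antisymm (Nat.lt_succ_iff.mp j'.isLt) (not_lt.mp h)
          rw [hj]) ((b i) ∘ₗ (LinearMap.snd ℂ (∀ j : Fin i, W (j.val + 1)) (V i))))
    ((B1 i) ∘ₗ (LinearMap.snd ℂ _ _))

/-- The moment map equation μ = 0. -/
def MomentZero {V W : ℕ → Type*}
    [∀ i, AddCommGroup (V i)] [∀ i, Module ℂ (V i)]
    [∀ i, AddCommGroup (W i)] [∀ i, Module ℂ (W i)]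
    (n : ℕ)
    (B1 : ∀ i, V i →ₗ[ℂ] V (i + 1)) (B2 : ∀ i, V i →ₗ[ℂ] V i)
    (a : ∀ i, W i →ₗ[ℂ] V i) (b : ∀ i, V i →ₗ[ℂ] W (i + 1)) : Prop :=
  ∀ i, 1 ≤ i → i ≤ n - 2 →
    (B1 i) ∘ₗ (B2 i) - (B2 (i + 1)) ∘ₗ (B1 i) + (a (i + 1)) ∘ₗ (b i) = 0

/-- Stability of a handsaw quiver datum. -/
def IsStable {V W : ℕ → Type*}
    [∀ i, AddCommGroup (V i)] [∀ i, Module ℂ (V i)]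
    [∀ i, AddCommGroup (W i)] [∀ i, Module ℂ (W i)]
    (n : ℕ)
    (B1 : ∀ i, V i →ₗ[ℂ] V (i + 1)) (B2 : ∀ i, V i →ₗ[ℂ] V i)
    (a : ∀ i, W i →ₗ[ℂ] V i) : Prop :=
  ∀ S : ∀ i, Submodule ℂ (V i),
    (∀ i, 1 ≤ i → i ≤ n - 2 → (S i).map (B1 i) ≤ S (i + 1)) →
    (∀ i, 1 ≤ i → i ≤ n - 1 → (S i).map (B2 i) ≤ S i) →
    (∀ i, 1 ≤ i → i ≤ n - 1 → LinearMap.range (a i) ≤ S i) →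
    ∀ i, 1 ≤ i → i ≤ n - 1 → S i = ⊤

/-- Costability of a handsaw quiver datum. -/
def IsCostable {V W : ℕ → Type*}
    [∀ i, AddCommGroup (V i)] [∀ i, Module ℂ (V i)]
    [∀ i, AddCommGroup (W i)] [∀ i, Module ℂ (W i)]
    (n : ℕ)
    (B1 : ∀ i, V i →ₗ[ℂ] V (i + 1)) (B2 : ∀ i, V i →ₗ[ℂ] V i)
    (b : ∀ i, V i →ₗ[ℂ] W (i + 1)) : Prop :=
  ∀ S : ∀ i, Submodule ℂ (V i),
    (∀ i, 1 ≤ i → i ≤ n - 2 → (S i).map (B1 i) ≤ S (i + 1)) →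
    (∀ i, 1 ≤ i → i ≤ n - 1 → (S i).map (B2 i) ≤ S i) →
    (∀ i, 1 ≤ i → i ≤ n - 1 → S i ≤ LinearMap.ker (b i)) →
    ∀ i, 1 ≤ i → i ≤ n - 1 → S i = ⊥

section HelperLemmas

variable {V W : ℕ → Type*}
    [∀ i, AddCommGroup (V i)] [∀ i, Module ℂ (V i)]
    [∀ i, AddCommGroup (W i)] [∀ i, Module ℂ (W i)]
    (B1 : ∀ i, V i →ₗ[ℂ] V (i + 1)) (B2 : ∀ i, V i →ₗ[ℂ] V i)
    (a : ∀ i, W i →ₗ[ℂ] V i)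

theorem AtoV_self (k : ℕ) (hk : 1 ≤ k) : AtoV B1 a k k = a k := by
  obtain ⟨m, rfl⟩ := Nat.exists_eq_add_of_le hk
  rw [Nat.add_comm] at *
  rw [AtoV, dif_pos rfl]
  exact cast_eq_iff_heq.mpr HEq.rfl

theorem AtoV_step (i j : ℕ) (h : j ≤ i) :
    AtoV B1 a (i + 1) j = (B1 i) ∘ₗ (AtoV B1 a i j) := by
  rw [AtoV, dif_neg (by omega)]

def psi (i : ℕ) (φ : V i →ₗ[ℂ] ℂ) : (k : ℕ) → (V k →ₗ[ℂ] ℂ) :=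
  fun k =>
    if h : k = i then cast (by rw [h]) φ
    else if hk : k < i then (psi i φ (k + 1)) ∘ₗ (B1 k)
    else 0
termination_by k => i - k
decreasing_by omega

theorem psi_self (i : ℕ) (φ : V i →ₗ[ℂ] ℂ) : psi B1 i φ i = φ := by
  rw [psi, dif_pos rfl]
  exact cast_eq_iff_heq.mpr HEq.rfl

theorem psi_lt (i : ℕ) (φ : V i →ₗ[ℂ] ℂ) (k : ℕ) (h : k < i) :
    psi B1 i φ k = (psi B1 i φ (k + 1)) ∘ₗ (B1 k) := by
  rw [psi, dif_neg (by omega), dif_pos h]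

theorem psi_gt (i : ℕ) (φ : V i →ₗ[ℂ] ℂ) (k : ℕ) (h : i < k) :
    psi B1 i φ k = 0 := by
  rw [psi, dif_neg (by omega), dif_neg (by omega)]

theorem psi_AtoV (i : ℕ) (φ : V i →ₗ[ℂ] ℂ) (j : ℕ) :
    ∀ k, j ≤ k → k ≤ i →
      (psi B1 i φ k) ∘ₗ (AtoV B1 a k j) = φ ∘ₗ (AtoV B1 a i j) := by
  intro k hjk hki
  obtain ⟨d, hd⟩ : ∃ d, i - k = d := ⟨i - k, rfl⟩
  induction d generalizing k with
  | zero =>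
    have : k = i := by omega
    subst this
    rw [psi_self]
  | succ m ih =>
    have hki' : k < i := by omega
    rw [psi_lt B1 i φ k hki', LinearMap.comp_assoc, ← AtoV_step B1 a k j hjk]
    exact ih (k + 1) (by omega) (by omega) (by omega)


end HelperLemmas

section MainHelpers

set_option linter.unusedSectionVars false

variable {V W : ℕ → Type*}
    [∀ i, AddCommGroup (V i)] [∀ i, Module ℂ (V i)] [∀ i, FiniteDimensional ℂ (V i)]
    [∀ i, AddCommGroup (W i)] [∀ i, Module ℂ (W i)] [∀ i, FiniteDimensional ℂ (W i)]
    (B1 : ∀ i, V i →ₗ[ℂ] V (i + 1)) (B2 : ∀ i, V i →ₗ[ℂ] V i)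
    (a : ∀ i, W i →ₗ[ℂ] V i) (b : ∀ i, V i →ₗ[ℂ] W (i + 1))

theorem psi_B2 (n : ℕ) (hn : 2 ≤ n) (hmu : MomentZero n B1 B2 a b)
    (i : ℕ) (hi : i ≤ n - 1) (φ : V i →ₗ[ℂ] ℂ) (z : ℂ)
    (hφB2 : φ ∘ₗ (B2 i) = z • φ)
    (hφA : ∀ j, 1 ≤ j → j ≤ i → φ ∘ₗ (AtoV B1 a i j) = 0) :
    ∀ k, 1 ≤ k → k ≤ i → (psi B1 i φ k) ∘ₗ (B2 k) = z • (psi B1 i φ k) := by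
  intro k h1 hki
  obtain ⟨d, hd⟩ : ∃ d, i - k = d := ⟨i - k, rfl⟩
  induction d generalizing k with
  | zero =>
    have : k = i := by omega
    subst this
    rw [psi_self]; exact hφB2
  | succ m ih =>
    have hki' : k < i := by omega
    have hmuk := hmu k h1 (by omega)
    have hB1B2 : (B1 k) ∘ₗ (B2 k) =
        (B2 (k + 1)) ∘ₗ (B1 k) - (a (k + 1)) ∘ₗ (b k) := by
      linear_combination (norm := module) hmuk
    rw [psi_lt B1 i φ k hki', LinearMap.comp_assoc, hB1B2, LinearMap.comp_sub,
      ← LinearMap.comp_assoc, ← LinearMap.comp_assoc]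
    have h1' := ih (k + 1) (by omega) (by omega) (by omega)
    rw [h1']
    have hA : (psi B1 i φ (k + 1)) ∘ₗ (a (k + 1)) = 0 := by
      rw [← AtoV_self B1 a (k + 1) (by omega),
        psi_AtoV B1 a i φ (k + 1) (k + 1) le_rfl (by omega),
        hφA (k + 1) (by omega) (by omega)]
    rw [hA, LinearMap.zero_comp, sub_zero, LinearMap.smul_comp]


end MainHelpers

theorem AtoV_mem_aux {V W : ℕ → Type*}
    [∀ i, AddCommGroup (V i)] [∀ i, Module ℂ (V i)]
    [∀ i, AddCommGroup (W i)] [∀ i, Module ℂ (W i)]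
    (B1 : ∀ i, V i →ₗ[ℂ] V (i + 1)) (a : ∀ i, W i →ₗ[ℂ] V i)
    (n : ℕ) (hn : 2 ≤ n) (S : ∀ i, Submodule ℂ (V i))
    (hB1 : ∀ i, 1 ≤ i → i ≤ n - 2 → (S i).map (B1 i) ≤ S (i + 1))
    (ha : ∀ i, 1 ≤ i → i ≤ n - 1 → LinearMap.range (a i) ≤ S i) :
    ∀ i k, 1 ≤ k → k ≤ i → i ≤ n - 1 → ∀ w, AtoV B1 a i k w ∈ S i := by
  intro i
  induction i with
  | zero => intro k h1 hk _ _; omega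
  | succ m ih =>
    intro k h1 hk hi w
    by_cases hkm : k = m + 1
    · subst hkm
      rw [AtoV_self _ _ _ (by omega)]
      exact ha (m + 1) (by omega) hi ⟨w, rfl⟩
    · have hk' : k ≤ m := by omega
      rw [AtoV_step _ _ _ _ hk']
      exact hB1 m (by omega) (by omega)
        (Submodule.mem_map_of_mem (ih k h1 hk' (by omega) w))


theorem stable_iff_alpha_surjective (n : ℕ) (hn : 2 ≤ n) (V W : ℕ → Type*)
    [∀ i, AddCommGroup (V i)] [∀ i, Module ℂ (V i)] [∀ i, FiniteDimensional ℂ (V i)]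
    [∀ i, AddCommGroup (W i)] [∀ i, Module ℂ (W i)] [∀ i, FiniteDimensional ℂ (W i)]
    (B1 : ∀ i, V i →ₗ[ℂ] V (i + 1)) (B2 : ∀ i, V i →ₗ[ℂ] V i)
    (a : ∀ i, W i →ₗ[ℂ] V i) (b : ∀ i, V i →ₗ[ℂ] W (i + 1))
    (hmu : MomentZero n B1 B2 a b) :
    IsStable n B1 B2 a ↔
      ∀ i, 1 ≤ i → i ≤ n - 1 → ∀ z : ℂ,
        Function.Surjective (alphaMap B1 B2 a i z) := by
  constructor
  · -- stable → surjective
    intro hst i h1 hi z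
    by_contra hns
    have hlt : LinearMap.range (alphaMap B1 B2 a i z) < ⊤ :=
      lt_top_iff_ne_top.mpr (fun h => hns (LinearMap.range_eq_top.mp h))
    obtain ⟨φ, hφ0, hφmap⟩ :=
      Submodule.exists_dual_map_eq_bot_of_lt_top hlt inferInstance
    have hφall : ∀ x, φ (alphaMap B1 B2 a i z x) = 0 := by
      intro x
      have hmem : φ (alphaMap B1 B2 a i z x) ∈
          Submodule.map φ (LinearMap.range (alphaMap B1 B2 a i z)) :=
        Submodule.mem_map_of_mem ⟨x, rfl⟩
      rw [hφmap] at hmem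
      exact (Submodule.mem_bot ℂ).mp hmem
    have hφB2 : φ ∘ₗ (B2 i) = z • φ := by
      ext v
      have h0 := hφall (0, v)
      have hz0 : φ (z • v - (B2 i) v) = 0 := by
        simpa [alphaMap] using h0
      simp only [map_sub, map_smul, smul_eq_mul, sub_eq_zero] at hz0
      simpa [LinearMap.comp_apply, smul_eq_mul] using hz0.symm
    have hφA : ∀ j, 1 ≤ j → j ≤ i → φ ∘ₗ (AtoV B1 a i j) = 0 := by
      intro j hj1 hji
      obtain ⟨m, rfl⟩ : ∃ m, j = m + 1 := ⟨j - 1, by omega⟩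
      ext w
      have h0 := hφall (Pi.single (⟨m, by omega⟩ : Fin i) w, 0)
      simp only [alphaMap, LinearMap.coprod_apply, map_zero, add_zero,
        LinearMap.sum_apply, LinearMap.comp_apply, LinearMap.proj_apply] at h0
      rw [map_sum] at h0
      rw [Finset.sum_eq_single (⟨m, by omega⟩ : Fin i)] at h0
      · simpa using h0
      · intro j' _ hne
        rw [Pi.single_eq_of_ne hne]
        simp
      · simp
    set S : ∀ k, Submodule ℂ (V k) := fun k => LinearMap.ker (psi B1 i φ k) with hS
    have hSi : S i = ⊤ := by
      apply hst S
      · intro k hk1 hk2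
        by_cases hki : k < i
        · intro v hv
          simp only [hS, Submodule.mem_map, LinearMap.mem_ker] at hv ⊢
          obtain ⟨u, hu, rfl⟩ := hv
          have := congrArg (fun f => f u) (psi_lt B1 i φ k hki)
          simp only [LinearMap.comp_apply] at this
          rw [← this, hu]
        · intro v _
          simp only [hS, LinearMap.mem_ker, psi_gt B1 i φ (k + 1) (by omega)]
          rfl
      · intro k hk1 hk2
        by_cases hki : k ≤ i
        · intro v hv
          simp only [hS, Submodule.mem_map, LinearMap.mem_ker] at hv ⊢
          obtain ⟨u, hu, rfl⟩ := hv
          have := congrArg (fun f => f u)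
            (psi_B2 B1 B2 a b n hn hmu i hi φ z hφB2 hφA k hk1 hki)
          simp only [LinearMap.comp_apply, LinearMap.smul_apply] at this
          rw [this, hu, smul_zero]
        · intro v _
          simp only [hS, LinearMap.mem_ker, psi_gt B1 i φ k (by omega)]
          rfl
      · intro k hk1 hk2
        by_cases hki : k ≤ i
        · rintro v ⟨w, rfl⟩
          simp only [hS, LinearMap.mem_ker]
          have : (psi B1 i φ k) ∘ₗ (a k) = 0 := by
            rw [← AtoV_self B1 a k hk1,
              psi_AtoV B1 a i φ k k le_rfl hki, hφA k hk1 hki]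
          exact congrArg (fun f => f w) this
        · rintro v ⟨w, rfl⟩
          simp only [hS, LinearMap.mem_ker, psi_gt B1 i φ k (by omega)]
          rfl
      · exact h1
      · exact hi
    rw [hS] at hSi
    simp only [psi_self] at hSi
    exact hφ0 (LinearMap.ker_eq_top.mp hSi)
  · -- surjective → stable
    intro hsurj S hB1 hB2 ha i h1 hi
    by_contra hne
    have hlt : S i < ⊤ := lt_top_iff_ne_top.mpr hne
    haveI := Submodule.Quotient.nontrivial_iff.mpr hlt.ne
    set g : Module.End ℂ (V i ⧸ S i) :=
      Submodule.mapQ (S i) (S i) (B2 i)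
        (Submodule.map_le_iff_le_comap.mp (hB2 i h1 hi)) with hg
    obtain ⟨z, hz⟩ := Module.End.exists_eigenvalue g
    obtain ⟨v, hv⟩ := hz.exists_hasEigenvector
    set h : Module.End ℂ (V i ⧸ S i) := z • LinearMap.id - g with hh
    have hsurjh : Function.Surjective h := by
      intro q
      obtain ⟨x, rfl⟩ := Submodule.mkQ_surjective (S i) q
      obtain ⟨p, hp⟩ := hsurj i h1 hi z x
      refine ⟨Submodule.Quotient.mk p.2, ?_⟩
      have hgp : g (Submodule.Quotient.mk p.2) =
          Submodule.Quotient.mk ((B2 i) p.2) := by rw [hg]; exact Submodule.mapQ_apply _ _ _ _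
      have hs : (∑ j : Fin i, (AtoV B1 a i (j.val + 1)) ∘ₗ (LinearMap.proj j)) p.1
          ∈ S i := by
        rw [LinearMap.sum_apply]
        refine Submodule.sum_mem _ fun j _ => ?_
        exact AtoV_mem_aux B1 a n hn S hB1 ha i (j.val + 1) (by omega)
          (by omega) hi (p.1 j)
      have hx : x = (∑ j : Fin i, (AtoV B1 a i (j.val + 1)) ∘ₗ (LinearMap.proj j)) p.1
          + (z • p.2 - (B2 i) p.2) := by
        rw [← hp]
        rfl
      rw [Submodule.mkQ_apply, hx]
      simp only [hh, LinearMap.sub_apply, LinearMap.smul_apply, LinearMap.id_apply, hgp]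
      rw [Submodule.Quotient.mk_add, Submodule.Quotient.mk_sub,
        Submodule.Quotient.mk_smul, (Submodule.Quotient.mk_eq_zero (S i)).mpr hs,
        zero_add]
    have hinjh : Function.Injective h :=
      (LinearMap.injective_iff_surjective).mpr hsurjh
    have : h v = 0 := by
      simp [hh, LinearMap.sub_apply, hv.apply_eq_smul]
    exact hv.2 (hinjh (by simpa using this))

end
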